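/- arXiv:1512.01149 — 2 statements merged into one kernel-verified Lean document; each statement's English description precedes it below -/
import Mathlib

section
/- Let p be a prime and A a commutative ring with no p-torsion. Let x = (x_0, x_1, x_2, …) be a sequence of elements of A such that x_i ∈ pA for all i, and such that x_i → 0 p-adically (for every a ≥ 1 there is i_0 with x_i ∈ p^a A for all i > i_0). Fix n ≥ 0. Then for every a ≥ 1 there exists M such that for all m ≥ M the ghost sum w_{n+m}(x) = Σ_{i=0}^{n+m} p^i x_i^{p^{n+m-i}} lies in p^{m+a} A. -/
theorem stmt_4 (p : ℕ) (hp : p.Prime) (A : Type*) [CommRing A]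
    (htf : ∀ a : A, (p : A) * a = 0 → a = 0)
    (x : ℕ → A)
    (hx : ∀ i, x i ∈ Ideal.span {(p : A)})
    (hconv : ∀ a : ℕ, 1 ≤ a → ∃ i0 : ℕ, ∀ i, i0 < i → x i ∈ Ideal.span {(p : A)} ^ a)
    (n : ℕ) :
    ∀ a : ℕ, 1 ≤ a → ∃ M : ℕ, ∀ m, M ≤ m →
      (∑ i ∈ Finset.range (n + m + 1), (p : A) ^ i * x i ^ p ^ (n + m - i))
        ∈ Ideal.span {(p : A)} ^ (m + a) := by
  intro a ha
  obtain ⟨i0, hi0⟩ := hconv (2 * a) (by omega)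
  refine ⟨i0 + a, fun m hm => ?_⟩
  set I := Ideal.span {(p : A)} with hI
  have hpI : (p : A) ∈ I := Ideal.mem_span_singleton_self _
  have h2 : ∀ t : ℕ, 2 * t ≤ 2 ^ t := by
    intro t
    induction t with
    | zero => simp
    | succ k ih =>
      rcases Nat.eq_zero_or_pos k with hk | hk
      · subst hk; simp
      · have h2k : 2 ≤ 2 ^ k := Nat.one_lt_two_pow_iff.mpr (by omega)
        calc 2 * (k + 1) = 2 * k + 2 := by ring
          _ ≤ 2 ^ k + 2 ^ k := by omega
          _ = 2 ^ (k + 1) := by ring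
  apply Ideal.sum_mem
  intro i hi
  simp only [Finset.mem_range] at hi
  have hile : i ≤ n + m := by omega
  by_cases hcase : i ≤ n + m - a
  · have ht : a ≤ n + m - i := by omega
    have hp2 : 2 ≤ p := hp.two_le
    set q := p ^ (n + m - i) with hq
    have hpow : n + m - i + a ≤ q := by
      calc n + m - i + a ≤ 2 * (n + m - i) := by omega
        _ ≤ 2 ^ (n + m - i) := h2 _
        _ ≤ q := Nat.pow_le_pow_left hp2 _
    have hmem : (p : A) ^ i * x i ^ q ∈ I ^ (i + q) := by
      rw [pow_add]
      exact Ideal.mul_mem_mul (Ideal.pow_mem_pow hpI i) (Ideal.pow_mem_pow (hx i) q)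
    exact Ideal.pow_le_pow_right (by omega) hmem
  · have hib : i0 < i := by omega
    have hxib := hi0 i hib
    set q := p ^ (n + m - i) with hq
    have hone : 1 ≤ q := Nat.one_le_pow _ _ hp.pos
    have h1 : x i ^ q ∈ I ^ (2 * a * q) := by
      rw [pow_mul]
      exact Ideal.pow_mem_pow hxib q
    have hmem : (p : A) ^ i * x i ^ q ∈ I ^ (i + 2 * a * q) := by
      rw [pow_add]
      exact Ideal.mul_mem_mul (Ideal.pow_mem_pow hpI i) h1
    have hr : 2 * a ≤ 2 * a * q := Nat.le_mul_of_pos_right _ (by omega)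
    exact Ideal.pow_le_pow_right (by omega) hmem
end

section
/- Let O be a discrete valuation ring with uniformizer π, fraction field K, and residue field k. Let V be a finite-dimensional K-vector space with a linear action of a group G, and let Λ, Λ' ⊆ V be two G-stable O-lattices. Assume that the induced representation of G on Λ ⊗_O k is irreducible (as a k-linear representation). Then Λ' = π^n Λ for some integer n. -/
open Pointwise in
private lemma mem_pt_smul {O M : Type*} [CommRing O] [AddCommGroup M] [Module O M]
    (r : O) (N : Submodule O M) (m : M) : m ∈ r • N ↔ ∃ s ∈ N, r • s = m := by
  rw [← SetLike.mem_coe, Submodule.coe_pointwise_smul, Set.mem_smul_set]; simp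

private def smulMapAux (O : Type*) {K V : Type*} [CommRing O] [Field K] [Algebra O K]
    [AddCommGroup V] [Module K V] [Module O V] [IsScalarTower O K V] (c : K) : V →ₗ[O] V where
  toFun v := c • v
  map_add' := smul_add c
  map_smul' r v := by
    show c • r • v = r • c • v
    rw [← algebraMap_smul K r v, ← algebraMap_smul K r (c • v), smul_smul, smul_smul, mul_comm]

private lemma smulMapAux_apply (O : Type*) {K V : Type*} [CommRing O] [Field K] [Algebra O K]
    [AddCommGroup V] [Module K V] [Module O V] [IsScalarTower O K V] (c : K) (v : V) :
    smulMapAux O c v = c • v := rfl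

open Pointwise in
theorem stmt_5 (O : Type*) [CommRing O] [IsDomain O] [IsDiscreteValuationRing O]
    (K : Type*) [Field K] [Algebra O K] [IsFractionRing O K]
    (π : O) (hπ : Irreducible π)
    (V : Type*) [AddCommGroup V] [Module K V] [FiniteDimensional K V]
    [Module O V] [IsScalarTower O K V]
    (G : Type*) [Group G] (ρ : Representation K G V)
    (Λ Λ' : Submodule O V)
    (hΛfg : Λ.FG) (hΛ'fg : Λ'.FG)
    (hΛspan : Submodule.span K (Λ : Set V) = ⊤)
    (hΛ'span : Submodule.span K (Λ' : Set V) = ⊤)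
    (hΛG : ∀ g : G, ∀ v ∈ Λ, ρ g v ∈ Λ)
    (hΛ'G : ∀ g : G, ∀ v ∈ Λ', ρ g v ∈ Λ')
    (hirr : ∀ N : Submodule O V, Ideal.span {π} • Λ ≤ N → N ≤ Λ →
      (∀ g : G, ∀ v ∈ N, ρ g v ∈ N) → N = Ideal.span {π} • Λ ∨ N = Λ) :
    ∃ n : ℤ, (Λ' : Set V) = ((algebraMap O K π) ^ n) • (Λ : Set V) := by
  classical
  set x : K := algebraMap O K π with hxdef
  have hπ0 : π ≠ 0 := hπ.ne_zero
  have hx0 : x ≠ 0 := by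
    simpa [hxdef] using (map_ne_zero_iff _ (IsFractionRing.injective O K)).mpr hπ0
  have hsmul : ∀ (r : O) (v : V), r • v = (algebraMap O K r) • v := fun r v =>
    (algebraMap_smul K r v).symm
  -- trivial case
  by_cases hV : Subsingleton V
  · refine ⟨0, ?_⟩
    ext w
    simp only [zpow_zero, one_smul]
    constructor
    · intro _; exact SetLike.mem_coe.mpr (by rw [Subsingleton.elim w 0]; exact Λ.zero_mem)
    · intro _; exact SetLike.mem_coe.mpr (by rw [Subsingleton.elim w 0]; exact Λ'.zero_mem)
  haveI : Nontrivial V := not_subsingleton_iff_nontrivial.mp hV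
  -- every element of K clears denominators
  have key : ∀ c : K, ∃ (m : ℕ) (r : O), x ^ m * c = algebraMap O K r := by
    intro c
    obtain ⟨p, q, hq⟩ := IsFractionRing.div_surjective (A := O) c
    have hq0 : q ≠ 0 := nonZeroDivisors.ne_zero hq.1
    obtain ⟨m, u, hqe⟩ := IsDiscreteValuationRing.eq_unit_mul_pow_irreducible hq0 hπ
    refine ⟨m, (↑u⁻¹ : O) * p, ?_⟩
    have hqK : algebraMap O K q = algebraMap O K (u : O) * x ^ m := by
      rw [hqe, map_mul, map_pow]
    have hu : algebraMap O K (u : O) ≠ 0 := by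
      simpa using (map_ne_zero_iff _ (IsFractionRing.injective O K)).mpr u.ne_zero
    have huu : algebraMap O K (↑u⁻¹ : O) * algebraMap O K (u : O) = 1 := by
      rw [← map_mul, ← map_one (algebraMap O K)]; congr 1
      exact_mod_cast u.inv_mul
    have hxm : x ^ m ≠ 0 := pow_ne_zero _ hx0
    rw [← hq.2, hqK, map_mul, div_mul_eq_div_div, mul_comm,
      div_mul_cancel₀ _ hxm, div_eq_iff hu]
    linear_combination (-(algebraMap O K p)) * huu
  have mono : ∀ (m l : ℕ), m ≤ l → ∀ u : V, x ^ m • u ∈ Λ → x ^ l • u ∈ Λ := by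
    intro m l hml u hu
    have he : x ^ l • u = π ^ (l - m) • (x ^ m • u) := by
      rw [hsmul, map_pow, smul_smul, ← pow_add, ← hxdef]
      congr 2
      omega
    rw [he]
    exact Λ.smul_mem _ hu
  have pull : ∀ v : V, ∃ m : ℕ, (x ^ m) • v ∈ Λ := by
    intro v
    have hv : v ∈ Submodule.span K (Λ : Set V) := hΛspan ▸ Submodule.mem_top
    induction hv using Submodule.span_induction with
    | mem w hw => exact ⟨0, by simpa using hw⟩
    | zero => exact ⟨0, by simp⟩
    | add u w _ _ ihu ihw =>
        obtain ⟨m, hm⟩ := ihu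
        obtain ⟨l, hl⟩ := ihw
        refine ⟨max m l, ?_⟩
        rw [smul_add]
        exact Λ.add_mem (mono m _ (le_max_left m l) u hm) (mono l _ (le_max_right m l) w hl)
    | smul c u _ ihu =>
        obtain ⟨m, hm⟩ := ihu
        obtain ⟨e, r, hr⟩ := key c
        refine ⟨e + m, ?_⟩
        have : x ^ (e + m) • (c • u) = r • (x ^ m • u) := by
          rw [hsmul, smul_smul, smul_smul, pow_add, ← hr]
          ring_nf
        rw [this]
        exact Λ.smul_mem _ hm
  -- commensurability : some power of π maps Λ' into Λ
  have ha : ∃ a : ℕ, ∀ w ∈ Λ', x ^ a • w ∈ Λ := by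
    obtain ⟨s, hs⟩ := hΛ'fg
    choose f hf using pull
    refine ⟨s.sup f, ?_⟩
    have hsub : (s : Set V) ⊆ (Λ.comap (smulMapAux O (x ^ (s.sup f))) : Set V) := by
      intro w hw
      simp only [SetLike.mem_coe, Submodule.mem_comap]
      exact mono (f w) _ (Finset.le_sup hw) w (hf w)
    intro w hw
    have : Λ' ≤ Λ.comap (smulMapAux O (x ^ (s.sup f))) := by
      rw [← hs]
      exact Submodule.span_le.mpr hsub
    exact this hw
  obtain ⟨a, ha⟩ := ha
  set P : ℤ → Prop := fun nn => ∀ w ∈ Λ', x ^ nn • w ∈ Λ with hPdef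
  have hPa : P (a : ℤ) := by
    intro w hw
    rw [zpow_natCast]
    exact ha w hw
  have hPsucc : ∀ nn : ℤ, P nn → P (nn + 1) := by
    intro nn h w hw
    have : x ^ (nn + 1) • w = π • (x ^ nn • w) := by
      rw [hsmul, ← hxdef, smul_smul, ← zpow_one_add₀ hx0, add_comm]
    rw [this]
    exact Λ.smul_mem _ (h w hw)
  have hPup : ∀ m l : ℤ, m ≤ l → P m → P l := by
    intro m l hml hm
    have hk : ∀ k : ℕ, P (m + k) := by
      intro k
      induction k with
      | zero => simpa using hm
      | succ k ih => simpa [add_assoc] using hPsucc (m + k) ih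
    have := hk (l - m).toNat
    rwa [Int.toNat_of_nonneg (by omega), add_sub_cancel] at this
  -- a nonzero element of Λ'
  obtain ⟨v, hvΛ', hv0⟩ : ∃ v ∈ Λ', v ≠ 0 := by
    by_contra h
    push_neg at h
    have hsub : (Λ' : Set V) ⊆ ((⊥ : Submodule K V) : Set V) := by
      intro w hw
      simpa using h w hw
    have hbt := Submodule.span_le.mpr hsub
    rw [hΛ'span, top_le_iff] at hbt
    obtain ⟨u, w, huw⟩ := exists_pair_ne V
    have hu : u = 0 := by
      have : u ∈ (⊥ : Submodule K V) := by rw [hbt]; trivial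
      simpa using this
    have hw : w = 0 := by
      have : w ∈ (⊥ : Submodule K V) := by rw [hbt]; trivial
      simpa using this
    exact huw (hu.trans hw.symm)
  -- boundedness below
  have hbdd : ∃ b : ℤ, ∀ nn : ℤ, P nn → b ≤ nn := by
    by_contra h
    push_neg at h
    have hall : ∀ m : ℕ, x ^ (-(m : ℤ)) • v ∈ Λ := by
      intro m
      obtain ⟨nn, hPnn, hlt⟩ := h (-(m : ℤ))
      exact hPup nn _ hlt.le hPnn v hvΛ'
    haveI : IsNoetherian O Λ := isNoetherian_of_fg_of_noetherian Λ hΛfg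
    have hstep : ∀ m : ℕ, x ^ (-(m : ℤ)) • v = π • (x ^ (-((m + 1 : ℕ) : ℤ)) • v) := by
      intro m
      rw [hsmul, ← hxdef, smul_smul, ← zpow_one_add₀ hx0,
        show (1 : ℤ) + -((m + 1 : ℕ) : ℤ) = -(m : ℤ) from by push_cast; omega]
    set f : ℕ → Submodule O ↥Λ := fun m =>
      Submodule.span O {(⟨x ^ (-(m : ℤ)) • v, hall m⟩ : ↥Λ)} with hfdef
    have hfmono : Monotone f := by
      apply monotone_nat_of_le_succ
      intro m
      rw [hfdef]
      apply Submodule.span_le.mpr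
      intro z hz
      rw [Set.mem_singleton_iff] at hz
      subst hz
      apply SetLike.mem_coe.mpr
      rw [Submodule.mem_span_singleton]
      refine ⟨π, ?_⟩
      apply Subtype.ext
      exact (hstep m).symm
    obtain ⟨m, hm⟩ := monotone_stabilizes_iff_noetherian.mpr inferInstance ⟨f, hfmono⟩
    have hmem : (⟨x ^ (-((m + 1 : ℕ) : ℤ)) • v, hall (m + 1)⟩ : ↥Λ) ∈ f m := by
      have h2 : f (m + 1) ≤ f m := le_of_eq (hm (m + 1) (Nat.le_succ m)).symm
      exact h2 (Submodule.mem_span_singleton_self _)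
    rw [hfdef, Submodule.mem_span_singleton] at hmem
    obtain ⟨r, hr⟩ := hmem
    have hrV : (algebraMap O K r * x ^ (-(m : ℤ))) • v = x ^ (-((m + 1 : ℕ) : ℤ)) • v := by
      have := congrArg Subtype.val hr
      simpa [hsmul, smul_smul] using this
    have hcoef : algebraMap O K r * x ^ (-(m : ℤ)) = x ^ (-((m + 1 : ℕ) : ℤ)) := by
      by_contra hne
      have hz := sub_smul (algebraMap O K r * x ^ (-(m : ℤ))) (x ^ (-((m + 1 : ℕ) : ℤ))) v
      rw [hrV, sub_self] at hz
      rcases smul_eq_zero.mp hz with h1 | h1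
      · exact hne (sub_eq_zero.mp h1)
      · exact hv0 h1
    have hr1 : algebraMap O K r * x = 1 := by
      have h2 := congrArg (fun t : K => t * x ^ ((m : ℤ) + 1)) hcoef
      rw [mul_assoc, ← zpow_add₀ hx0, ← zpow_add₀ hx0,
        show -(m : ℤ) + ((m : ℤ) + 1) = 1 from by omega,
        show -((m + 1 : ℕ) : ℤ) + ((m : ℤ) + 1) = 0 from by push_cast; omega,
        zpow_one, zpow_zero] at h2
      exact h2
    have hrπ : r * π = 1 := by
      apply IsFractionRing.injective O K
      rw [map_mul, map_one, ← hxdef]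
      exact hr1
    exact hπ.not_isUnit (IsUnit.of_mul_eq_one (a := π) r (by rw [mul_comm]; exact hrπ))
  obtain ⟨n, hPn, hleast⟩ := Int.exists_least_of_bdd hbdd ⟨a, hPa⟩
  have hPn1 : ¬ P (n - 1) := fun h => by have := hleast _ h; omega
  set ℓ : V →ₗ[O] V := smulMapAux O (x ^ n) with hldef
  set M : Submodule O V := Λ'.map ℓ with hMdef
  have hMle : M ≤ Λ := by
    rintro _ ⟨w, hw, rfl⟩
    exact hPn w hw
  have hMmem : ∀ w ∈ Λ', x ^ n • w ∈ M := fun w hw => ⟨w, hw, rfl⟩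
  set J : Submodule O V := Ideal.span {π} • Λ with hJdef
  have hJ : J = π • Λ := Submodule.ideal_span_singleton_smul π Λ
  have hJle : J ≤ Λ := Submodule.smul_le_right
  have hG : ∀ g : G, ∀ w ∈ M ⊔ J, ρ g w ∈ M ⊔ J := by
    intro g w hw
    rw [Submodule.mem_sup] at hw
    obtain ⟨y, hy, z, hz, rfl⟩ := hw
    rw [map_add]
    apply Submodule.add_mem
    · apply Submodule.mem_sup_left
      obtain ⟨u, hu, rfl⟩ := hy
      refine ⟨ρ g u, hΛ'G g u hu, ?_⟩
      show x ^ n • ρ g u = ρ g (ℓ u)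
      rw [hldef, smulMapAux_apply]
      exact ((ρ g).map_smul (x ^ n) u).symm
    · apply Submodule.mem_sup_right
      rw [hJ, mem_pt_smul] at hz ⊢
      obtain ⟨u, hu, rfl⟩ := hz
      refine ⟨ρ g u, hΛG g u hu, ?_⟩
      rw [hsmul, hsmul, ← hxdef, (ρ g).map_smul]
  rcases hirr (M ⊔ J) le_sup_right (sup_le hMle hJle) hG with hc1 | hc2
  · exfalso
    apply hPn1
    intro w hw
    have hmem : x ^ n • w ∈ J := (le_trans le_sup_left (le_of_eq hc1)) (hMmem w hw)
    rw [hJ, mem_pt_smul] at hmem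
    obtain ⟨u, hu, huw⟩ := hmem
    have h3 : x • u = x ^ n • w := by rw [← huw, hsmul, ← hxdef]
    have h4 : x ^ (n - 1) • w = (x⁻¹ * x ^ n) • w := by
      rw [← zpow_neg_one, ← zpow_add₀ hx0, show (-1 : ℤ) + n = n - 1 from by omega]
    rw [h4, mul_smul, ← h3, smul_smul, inv_mul_cancel₀ hx0, one_smul]
    exact hu
  · have hjac : Ideal.span {π} ≤ Ideal.jacobson ⊥ := by
      rw [IsLocalRing.jacobson_eq_maximalIdeal ⊥ bot_ne_top, Ideal.span_le,
        Set.singleton_subset_iff]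
      exact IsLocalRing.mem_maximalIdeal _ |>.mpr hπ.not_isUnit
    have hΛleM : Λ ≤ M := Submodule.le_of_le_smul_of_le_jacobson_bot hΛfg hjac hc2.ge
    have hMΛ : M = Λ := le_antisymm hMle hΛleM
    refine ⟨-n, ?_⟩
    have hset : (Λ : Set V) = x ^ n • (Λ' : Set V) := by
      ext w
      rw [Set.mem_smul_set, ← hMΛ]
      simp only [hMdef, SetLike.mem_coe, Submodule.mem_map, hldef, smulMapAux_apply]
    rw [hset, smul_smul, ← zpow_add₀ hx0, show -n + n = 0 from by omega, zpow_zero, one_smul]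
end
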